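/- Let n ≥ 1 and h = (h_1,…,h_n) ∈ ℤ^n with h_i < h_{i+1} for all 1 ≤ i ≤ n−1. Define a partial order on ℤ^n by (x_1,…,x_n) ≤ (y_1,…,y_n) iff Σ_{j≤i} x_j ≤ Σ_{j≤i} y_j for all 1 ≤ i ≤ n, and let S_n act by (w(h))_i = h_{w^{-1}(i)}. Let I ⊆ {1,…,n−1} and let W_I ⊆ S_n be the subgroup generated by the transpositions (i,i+1) for i ∈ I. If w, w' ∈ S_n satisfy w(h) ≥ w'(h) and w ∈ W_I, then w' ∈ W_I. -/

import Mathlib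

open Finset

/-- Partial sum of the first `a` coordinates (zero-indexed: indices `< a`). -/
def psum {n : ℕ} (x : Fin n → ℤ) (a : ℕ) : ℤ :=
  ∑ j ∈ Finset.univ.filter (fun j : Fin n => (j : ℕ) < a), x j

/-- The parabolic subgroup `W_I ⊆ S_n` generated by the transpositions `(i, i+1)`
for `i ∈ I` (zero-indexed positions). -/
def WI (n : ℕ) (I : Set ℕ) : Subgroup (Equiv.Perm (Fin n)) :=
  Subgroup.closure
    { σ | ∃ i ∈ I, ∃ h : i + 1 < n,
        σ = Equiv.swap (⟨i, Nat.lt_of_succ_lt h⟩ : Fin n) (⟨i + 1, h⟩ : Fin n) }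

section Aux

variable {n : ℕ}

/-- Index set of the first `a` coordinates. -/
def Tset (n a : ℕ) : Finset (Fin n) := Finset.univ.filter (fun j : Fin n => (j : ℕ) < a)

lemma mem_Tset {a : ℕ} {j : Fin n} : j ∈ Tset n a ↔ (j : ℕ) < a := by
  simp [Tset]

lemma psum_eq {a : ℕ} (x : Fin n → ℤ) : psum x a = ∑ j ∈ Tset n a, x j := rfl

/-- `w` preserves every cut compatible with `I`. -/
def PresCuts (n : ℕ) (I : Set ℕ) (w : Equiv.Perm (Fin n)) : Prop :=
  ∀ a : ℕ, (∀ i ∈ I, i + 1 < n → a ≠ i + 1) → ∀ j : Fin n, ((w j : ℕ) < a ↔ (j : ℕ) < a)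

lemma presCuts_one (I : Set ℕ) : PresCuts n I (1 : Equiv.Perm (Fin n)) := by
  intro a _ j; rfl

lemma presCuts_mul {I : Set ℕ} {w v : Equiv.Perm (Fin n)}
    (hw : PresCuts n I w) (hv : PresCuts n I v) : PresCuts n I (w * v) := by
  intro a ha j
  have h1 := hw a ha (v j)
  have h2 := hv a ha j
  simpa [Equiv.Perm.mul_apply] using h1.trans h2

lemma presCuts_inv {I : Set ℕ} {w : Equiv.Perm (Fin n)}
    (hw : PresCuts n I w) : PresCuts n I w⁻¹ := by
  intro a ha j
  have h1 := hw a ha (w⁻¹ j)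
  simp only [Equiv.Perm.coe_inv, Equiv.apply_symm_apply] at h1
  exact h1.symm

lemma presCuts_swap {I : Set ℕ} {i : ℕ} (hi : i ∈ I) (hn : i + 1 < n) :
    PresCuts n I (Equiv.swap (⟨i, Nat.lt_of_succ_lt hn⟩ : Fin n) (⟨i + 1, hn⟩ : Fin n)) := by
  intro a ha j
  have hne : a ≠ i + 1 := ha i hi hn
  rcases eq_or_ne j ⟨i, Nat.lt_of_succ_lt hn⟩ with rfl | h1
  · rw [Equiv.swap_apply_left]; simp; omega
  · rcases eq_or_ne j ⟨i + 1, hn⟩ with rfl | h2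
    · rw [Equiv.swap_apply_right]; simp; omega
    · rw [Equiv.swap_apply_of_ne_of_ne h1 h2]

lemma presCuts_of_mem {I : Set ℕ} {w : Equiv.Perm (Fin n)} (hw : w ∈ WI n I) :
    PresCuts n I w := by
  induction hw using Subgroup.closure_induction with
  | mem σ hσ =>
    obtain ⟨i, hi, hn, rfl⟩ := hσ
    exact presCuts_swap hi hn
  | one => exact presCuts_one I
  | mul x y _ _ hx hy => exact presCuts_mul hx hy
  | inv x _ hx => exact presCuts_inv hx

/-- The inversion set of a permutation. -/
def invSet (w : Equiv.Perm (Fin n)) : Finset (Fin n × Fin n) :=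
  Finset.univ.filter (fun p => p.1 < p.2 ∧ w p.2 < w p.1)

lemma adj_swap_lt {x y a b : Fin n} (hxy : (y : ℕ) = (x : ℕ) + 1) (hab : a < b)
    (hne : ¬(a = x ∧ b = y)) : Equiv.swap x y a < Equiv.swap x y b := by
  have hab' : (a : ℕ) < b := hab
  have hxy' : (y : ℕ) = (x : ℕ) + 1 := hxy
  rcases eq_or_ne a x with rfl | hax
  · rcases eq_or_ne b y with rfl | hby
    · exact absurd ⟨rfl, rfl⟩ hne
    · have hbx : b ≠ a := (ne_of_gt hab)
      have hby' : (b : ℕ) ≠ (y : ℕ) := fun hc => hby (Fin.ext hc)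
      rw [Equiv.swap_apply_left, Equiv.swap_apply_of_ne_of_ne hbx hby,
        Fin.lt_iff_val_lt_val]
      omega
  · rcases eq_or_ne a y with rfl | hay
    · have hbx : b ≠ x := by
        intro hc
        subst hc
        rw [Fin.lt_iff_val_lt_val] at hab
        omega
      have hby : b ≠ a := ne_of_gt hab
      rw [Equiv.swap_apply_right, Equiv.swap_apply_of_ne_of_ne hbx hby,
        Fin.lt_iff_val_lt_val]
      omega
    · rw [Equiv.swap_apply_of_ne_of_ne hax hay]
      rcases eq_or_ne b x with rfl | hbx
      · rw [Equiv.swap_apply_left, Fin.lt_iff_val_lt_val]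
        omega
      · rcases eq_or_ne b y with rfl | hby
        · have hax' : (a : ℕ) ≠ (x : ℕ) := fun hc => hax (Fin.ext hc)
          rw [Equiv.swap_apply_right, Fin.lt_iff_val_lt_val]
          omega
        · rw [Equiv.swap_apply_of_ne_of_ne hbx hby]
          exact hab

lemma invSet_mul_swap_lt {w : Equiv.Perm (Fin n)} {x y : Fin n}
    (hxy : (y : ℕ) = (x : ℕ) + 1) (hdes : w y < w x) :
    (invSet (w * Equiv.swap x y)).card < (invSet w).card := by
  set s := Equiv.swap x y with hs
  have hxyl : x < y := by rw [Fin.lt_iff_val_lt_val]; omega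
  have hfinj : Function.Injective (fun p : Fin n × Fin n => (s p.1, s p.2)) := by
    intro p q hpq
    simp only [Prod.mk.injEq] at hpq
    exact Prod.ext (s.injective hpq.1) (s.injective hpq.2)
  have hsub : (invSet (w * s)).image (fun p => (s p.1, s p.2)) ⊆ invSet w := by
    intro q hq
    simp only [Finset.mem_image] at hq
    obtain ⟨p, hp, rfl⟩ := hq
    simp only [invSet, Finset.mem_filter, Finset.mem_univ, true_and] at hp ⊢
    simp only [Equiv.Perm.mul_apply] at hp ⊢
    refine ⟨adj_swap_lt hxy hp.1 ?_, hp.2⟩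
    rintro ⟨rfl, rfl⟩
    rw [Equiv.swap_apply_left, Equiv.swap_apply_right] at hp
    exact absurd hp.2 (not_lt.2 hdes.le)
  have hxy_mem : (x, y) ∈ invSet w := by
    simp [invSet, hxyl, hdes]
  have hxy_nmem : (x, y) ∉ (invSet (w * s)).image (fun p => (s p.1, s p.2)) := by
    intro hmem
    simp only [Finset.mem_image] at hmem
    obtain ⟨p, hp, hpe⟩ := hmem
    simp only [Prod.mk.injEq] at hpe
    have h1 : p.1 = y := s.injective (by rw [hpe.1, hs, Equiv.swap_apply_right])
    have h2 : p.2 = x := s.injective (by rw [hpe.2, hs, Equiv.swap_apply_left])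
    simp only [invSet, Finset.mem_filter] at hp
    have := hp.2.1
    rw [h1, h2] at this
    exact absurd this (not_lt.2 hxyl.le)
  calc (invSet (w * s)).card
      = ((invSet (w * s)).image (fun p => (s p.1, s p.2))).card :=
        (Finset.card_image_of_injective _ hfinj).symm
    _ < (invSet w).card := Finset.card_lt_card ⟨hsub, fun hc => hxy_nmem (hc hxy_mem)⟩

lemma exists_descent {w : Equiv.Perm (Fin n)} (hne : w ≠ 1) :
    ∃ x y : Fin n, (y : ℕ) = (x : ℕ) + 1 ∧ w y < w x := by
  by_contra hc
  push_neg at hc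
  have hsm : StrictMono w := by
    cases n with
    | zero => intro a; exact absurd a.isLt (by omega)
    | succ m =>
      rw [Fin.strictMono_iff_lt_succ]
      intro i
      have h1 : ((i.succ : Fin (m + 1)) : ℕ) = ((i.castSucc : Fin (m + 1)) : ℕ) + 1 := by simp
      have h2 := hc i.castSucc i.succ h1
      have h3 : w i.castSucc ≠ w i.succ := by
        intro hcontra
        have h4 := w.injective hcontra
        have : (i.castSucc : ℕ) = (i.succ : ℕ) := by rw [h4]
        omega
      exact lt_of_le_of_ne h2 h3
  apply hne
  ext i
  have h4 : (StrictMono.orderIsoOfSurjective w hsm w.surjective i : ℕ) = (i : ℕ) :=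
    Fin.coe_orderIso_apply _ i
  simpa using h4

lemma sum_Tset_lt {a : ℕ} {h : Fin n → ℤ} (hmono : StrictMono h) {S : Finset (Fin n)}
    (hcard : S.card = (Tset n a).card) (hne : S ≠ Tset n a) :
    ∑ j ∈ Tset n a, h j < ∑ j ∈ S, h j := by
  have hdcard : (Tset n a \ S).card = (S \ Tset n a).card := Finset.card_sdiff_comm hcard.symm
  have hDne : (Tset n a \ S).Nonempty := by
    rw [Finset.nonempty_iff_ne_empty]
    intro hc
    have hsub : Tset n a ⊆ S := by rwa [← Finset.sdiff_eq_empty_iff_subset]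
    exact hne (Finset.eq_of_subset_of_card_le hsub hcard.le).symm
  have key : ∑ j ∈ Tset n a \ S, h j < ∑ j ∈ S \ Tset n a, h j := by
    have e : {x // x ∈ Tset n a \ S} ≃ {x // x ∈ S \ Tset n a} := Finset.equivOfCardEq hdcard
    have hlt : ∀ p : {x // x ∈ Tset n a \ S}, h p.1 < h (e p).1 := by
      intro p
      have hp : (p.1 : ℕ) < a := mem_Tset.1 (Finset.mem_sdiff.1 p.2).1
      have hq : ¬ ((e p).1 : ℕ) < a :=
        fun hc => (Finset.mem_sdiff.1 (e p).2).2 (mem_Tset.2 hc)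
      exact hmono (by rw [Fin.lt_iff_val_lt_val]; omega)
    have hne' : Nonempty {x // x ∈ Tset n a \ S} := ⟨⟨hDne.choose, hDne.choose_spec⟩⟩
    calc ∑ j ∈ Tset n a \ S, h j = ∑ p : {x // x ∈ Tset n a \ S}, h p.1 :=
          (Finset.sum_coe_sort _ h).symm
      _ < ∑ p : {x // x ∈ Tset n a \ S}, h (e p).1 :=
          Finset.sum_lt_sum_of_nonempty Finset.univ_nonempty (fun p _ => hlt p)
      _ = ∑ q : {x // x ∈ S \ Tset n a}, h q.1 := Fintype.sum_equiv e _ _ (fun p => rfl)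
      _ = ∑ j ∈ S \ Tset n a, h j := Finset.sum_coe_sort _ h
  have h1 : ∑ j ∈ Tset n a ∩ S, h j + ∑ j ∈ Tset n a \ S, h j = ∑ j ∈ Tset n a, h j :=
    Finset.sum_inter_add_sum_sdiff (Tset n a) S h
  have h2 : ∑ j ∈ S ∩ Tset n a, h j + ∑ j ∈ S \ Tset n a, h j = ∑ j ∈ S, h j :=
    Finset.sum_inter_add_sum_sdiff S (Tset n a) h
  rw [Finset.inter_comm] at h2
  linarith

lemma mem_WI_of_presCuts (n : ℕ) (I : Set ℕ) :
    ∀ N (w : Equiv.Perm (Fin n)), (invSet w).card ≤ N → PresCuts n I w → w ∈ WI n I := by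
  intro N
  induction N with
  | zero =>
    intro w hcard hP
    by_cases hw1 : w = 1
    · subst hw1; exact one_mem _
    · obtain ⟨x, y, hxy, hdes⟩ := exists_descent hw1
      have hmem : (x, y) ∈ invSet w := by
        simp only [invSet, Finset.mem_filter, Finset.mem_univ, true_and]
        exact ⟨by rw [Fin.lt_iff_val_lt_val]; omega, hdes⟩
      have := Finset.card_pos.2 ⟨(x, y), hmem⟩
      omega
  | succ N ih =>
    intro w hcard hP
    by_cases hw1 : w = 1
    · subst hw1; exact one_mem _
    obtain ⟨x, y, hxy, hdes⟩ := exists_descent hw1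
    have hn : (x : ℕ) + 1 < n := by rw [← hxy]; exact y.isLt
    have hyx : y = (⟨(x : ℕ) + 1, hn⟩ : Fin n) := Fin.ext hxy
    have hxx : x = (⟨(x : ℕ), Nat.lt_of_succ_lt hn⟩ : Fin n) := Fin.ext rfl
    have hxI : (x : ℕ) ∈ I := by
      by_contra hxI
      have hcut : ∀ i ∈ I, i + 1 < n → (x : ℕ) + 1 ≠ i + 1 := by
        intro i hi _ hcEq
        have : i = (x : ℕ) := by omega
        exact hxI (this ▸ hi)
      have h1 := hP ((x : ℕ) + 1) hcut x
      have h2 := hP ((x : ℕ) + 1) hcut y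
      rw [Fin.lt_iff_val_lt_val] at hdes
      omega
    have hgen : Equiv.swap x y ∈ {σ : Equiv.Perm (Fin n) | ∃ i ∈ I, ∃ h : i + 1 < n,
        σ = Equiv.swap (⟨i, Nat.lt_of_succ_lt h⟩ : Fin n) (⟨i + 1, h⟩ : Fin n)} := by
      exact ⟨(x : ℕ), hxI, hn, by rw [← hyx, ← hxx]⟩
    have hsP : PresCuts n I (Equiv.swap x y) := by
      have hps := presCuts_swap (n := n) hxI hn
      rwa [← hyx, ← hxx] at hps
    have hP' : PresCuts n I (w * Equiv.swap x y) := presCuts_mul hP hsP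
    have hcard' : (invSet (w * Equiv.swap x y)).card ≤ N := by
      have := invSet_mul_swap_lt hxy hdes
      omega
    have hmem := ih (w * Equiv.swap x y) hcard' hP'
    have hw_eq : w = (w * Equiv.swap x y) * Equiv.swap x y := by
      rw [mul_assoc, Equiv.swap_mul_self, mul_one]
    rw [hw_eq]
    exact mul_mem hmem (Subgroup.subset_closure hgen)

end Aux

/-- If `h` is strictly increasing, `w ∈ W_I` and `w(h) ≥ w'(h)` for the
partial-sum order, then `w' ∈ W_I`. -/
theorem mem_WI_of_partial_sums_le (n : ℕ) (h : Fin n → ℤ) (hmono : StrictMono h)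
    (I : Set ℕ) (w w' : Equiv.Perm (Fin n)) (hw : w ∈ WI n I)
    (hge : ∀ a : ℕ, a ≤ n →
      psum (fun i => h (w'⁻¹ i)) a ≤ psum (fun i => h (w⁻¹ i)) a) :
    w' ∈ WI n I := by
  have hPw : PresCuts n I w := presCuts_of_mem hw
  refine mem_WI_of_presCuts n I (invSet w').card w' le_rfl ?_
  intro a hcut j
  by_cases han : a ≤ n
  swap
  · have hj := j.isLt
    have hwj := (w' j).isLt
    omega
  -- sum over w-image equals base sum
  have hinjw : ∀ x ∈ Tset n a, ∀ y ∈ Tset n a, w⁻¹ x = w⁻¹ y → x = y :=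
    fun x _ y _ hxy => w⁻¹.injective hxy
  have hinjw' : ∀ x ∈ Tset n a, ∀ y ∈ Tset n a, w'⁻¹ x = w'⁻¹ y → x = y :=
    fun x _ y _ hxy => w'⁻¹.injective hxy
  have himgw : (Tset n a).image (fun k => w⁻¹ k) = Tset n a := by
    ext k
    simp only [Finset.mem_image]
    constructor
    · rintro ⟨m, hm, rfl⟩
      have hiff := hPw a hcut (w⁻¹ m)
      simp only [Equiv.Perm.coe_inv, Equiv.apply_symm_apply] at hiff
      rw [mem_Tset] at hm ⊢
      exact hiff.1 hm
    · intro hk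
      refine ⟨w k, ?_, by simp⟩
      rw [mem_Tset] at hk ⊢
      exact (hPw a hcut k).2 hk
  have hpsum_w : psum (fun i => h (w⁻¹ i)) a = ∑ j ∈ Tset n a, h j := by
    rw [psum_eq]
    calc ∑ j ∈ Tset n a, h (w⁻¹ j)
        = ∑ k ∈ (Tset n a).image (fun k => w⁻¹ k), h k := (Finset.sum_image hinjw).symm
      _ = ∑ j ∈ Tset n a, h j := by rw [himgw]
  set S' := (Tset n a).image (fun k => w'⁻¹ k) with hS'
  have hpsum_w' : psum (fun i => h (w'⁻¹ i)) a = ∑ k ∈ S', h k := by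
    rw [psum_eq]
    exact (Finset.sum_image hinjw').symm
  have hcardS' : S'.card = (Tset n a).card := Finset.card_image_of_injective _ w'⁻¹.injective
  have hSeq : S' = Tset n a := by
    by_contra hS
    have hlt := sum_Tset_lt hmono hcardS' hS
    have hle := hge a han
    rw [hpsum_w, hpsum_w'] at hle
    omega
  constructor
  · intro hwj
    have : w' j ∈ Tset n a := mem_Tset.2 hwj
    have hjS : j ∈ S' := by
      rw [hS']
      exact Finset.mem_image.2 ⟨w' j, this, by simp⟩
    rw [hSeq, mem_Tset] at hjS
    exact hjS
  · intro hj
    have hjS : j ∈ S' := by rw [hSeq]; exact mem_Tset.2 hj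
    rw [hS'] at hjS
    obtain ⟨m, hm, hme⟩ := Finset.mem_image.1 hjS
    have : w' j = m := by rw [← hme]; simp
    rw [this]
    exact mem_Tset.1 hm
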